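/- Let U1, U2, U3, U4 be pairwise transverse n-dimensional subspaces of a real vector space V of dimension 2n. Then: (i) for every g ∈ GL(V), the cross-ratio [gU1, gU2; gU3, gU4] equals (g|_{U1}) ∘ [U1,U2;U3,U4] ∘ (g|_{U1})⁻¹, where g|_{U1} : U1 → gU1 is the isomorphism induced by g; (ii) [U1,U2;U4,U3] = id_{U1} − [U1,U2;U3,U4]; (iii) [U1,U2;U3,U4] is an invertible endomorphism of U1 and [U1,U4;U3,U2] = [U1,U2;U3,U4]⁻¹; (iv) there is a linear isomorphism h : U1 → U3 such that [U3,U2;U1,U4] = h ∘ [U1,U2;U3,U4]⁻¹ ∘ h⁻¹. -/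

import Mathlib

open Module Submodule

variable {V : Type*} [AddCommGroup V] [Module ℝ V]

/-- The projection onto `U` with kernel `W`, as an endomorphism of `V`. -/
noncomputable def projTo (U W : Submodule ℝ V) (h : IsCompl U W) : V →ₗ[ℝ] V :=
  U.subtype ∘ₗ U.linearProjOfIsCompl W h

/-- The reflection in the pair `(U, W)`: `π_U^W - π_W^U`. -/
noncomputable def reflPair (U W : Submodule ℝ V) (h : IsCompl U W) : V →ₗ[ℝ] V :=
  projTo U W h - projTo W U h.symm

/-- The generalized cross-ratio `[U1,U2;U3,U4]`: the restriction of
`π_{U1}^{U2} ∘ π_{U3}^{U4}` to `U1`, as an endomorphism of `U1`. -/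
noncomputable def crossRatio (U1 U2 U3 U4 : Submodule ℝ V)
    (h12 : IsCompl U1 U2) (h34 : IsCompl U3 U4) : U1 →ₗ[ℝ] U1 :=
  (U1.linearProjOfIsCompl U2 h12) ∘ₗ (projTo U3 U4 h34) ∘ₗ U1.subtype

lemma proj_eq_of {U W : Submodule ℝ V} (h : IsCompl U W) {x : V} {y : U}
    (hxy : x - (y : V) ∈ W) : U.linearProjOfIsCompl W h x = y := by
  have hx : x = (y : V) + (x - (y : V)) := by abel
  rw [hx, map_add, (show U.linearProjOfIsCompl W h y = y from Submodule.projectionOnto_apply_left h y),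
    (show U.linearProjOfIsCompl W h (x - y) = 0 from
      Submodule.projectionOnto_apply_of_mem_right h hxy),
    add_zero]

lemma sub_projTo_mem {U W : Submodule ℝ V} (h : IsCompl U W) (x : V) :
    x - ((U.linearProjOfIsCompl W h x : U) : V) ∈ W := by
  have h1 : ((U.linearProjOfIsCompl W h x : U) : V) + ((W.linearProjOfIsCompl U h.symm x : W) : V)
      = x := Submodule.projection_add_projection_eq_self h x
  have h2 : x - ((U.linearProjOfIsCompl W h x : U) : V)
      = ((W.linearProjOfIsCompl U h.symm x : W) : V) := by
    rw [sub_eq_iff_eq_add']; exact h1.symm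
  rw [h2]; exact Submodule.coe_mem _

lemma crossRatio_eq {U1 U2 U3 U4 : Submodule ℝ V} (h12 : IsCompl U1 U2)
    (h34 : IsCompl U3 U4) (x c : U1) (y : V) (hy3 : y ∈ U3)
    (hy4 : (x : V) - y ∈ U4) (hc : y - (c : V) ∈ U2) :
    crossRatio U1 U2 U3 U4 h12 h34 x = c := by
  have h1 : U3.linearProjOfIsCompl U4 h34 (x : V) = ⟨y, hy3⟩ := proj_eq_of h34 hy4
  show U1.linearProjOfIsCompl U2 h12 ((U3.linearProjOfIsCompl U4 h34 (x : V) : U3) : V) = c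
  rw [h1]
  exact proj_eq_of h12 hc

lemma crossRatio_comp {U1 U2 U3 U4 : Submodule ℝ V} (h12 : IsCompl U1 U2)
    (h34 : IsCompl U3 U4) (h14 : IsCompl U1 U4) (h32 : IsCompl U3 U2) :
    crossRatio U1 U4 U3 U2 h14 h32 ∘ₗ crossRatio U1 U2 U3 U4 h12 h34 = LinearMap.id := by
  refine LinearMap.ext fun x => ?_
  simp only [LinearMap.comp_apply, LinearMap.id_apply]
  set y : V := ((U3.linearProjOfIsCompl U4 h34 (x : V) : U3) : V) with hy
  have hy3 : y ∈ U3 := Submodule.coe_mem _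
  have hy4 : (x : V) - y ∈ U4 := sub_projTo_mem h34 (x : V)
  have hc : y - ((crossRatio U1 U2 U3 U4 h12 h34 x : U1) : V) ∈ U2 := sub_projTo_mem h12 y
  exact crossRatio_eq h14 h32 _ x y hy3
    (by simpa [neg_sub] using U2.neg_mem hc) (by simpa [neg_sub] using U4.neg_mem hy4)

theorem stmt4 {V : Type*} [AddCommGroup V] [Module ℝ V] [FiniteDimensional ℝ V]
    (n : ℕ) (hV : finrank ℝ V = 2 * n)
    (U1 U2 U3 U4 : Submodule ℝ V)
    (hd1 : finrank ℝ U1 = n) (hd2 : finrank ℝ U2 = n)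
    (hd3 : finrank ℝ U3 = n) (hd4 : finrank ℝ U4 = n)
    (h12 : IsCompl U1 U2) (h13 : IsCompl U1 U3) (h14 : IsCompl U1 U4)
    (h23 : IsCompl U2 U3) (h24 : IsCompl U2 U4) (h34 : IsCompl U3 U4) :
    -- (i) equivariance under `GL(V)`
    (∀ (e : V ≃ₗ[ℝ] V)
        (h12' : IsCompl (U1.map (e : V →ₗ[ℝ] V)) (U2.map (e : V →ₗ[ℝ] V)))
        (h34' : IsCompl (U3.map (e : V →ₗ[ℝ] V)) (U4.map (e : V →ₗ[ℝ] V))),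
        crossRatio (U1.map (e : V →ₗ[ℝ] V)) (U2.map (e : V →ₗ[ℝ] V))
            (U3.map (e : V →ₗ[ℝ] V)) (U4.map (e : V →ₗ[ℝ] V)) h12' h34'
          = (e.submoduleMap U1).toLinearMap ∘ₗ crossRatio U1 U2 U3 U4 h12 h34 ∘ₗ
              (e.submoduleMap U1).symm.toLinearMap) ∧
    -- (ii) `[U1,U2;U4,U3] = id - [U1,U2;U3,U4]`
    (crossRatio U1 U2 U4 U3 h12 h34.symm
      = LinearMap.id - crossRatio U1 U2 U3 U4 h12 h34) ∧
    -- (iii) `[U1,U2;U3,U4]` is invertible and `[U1,U4;U3,U2]` is its inverse,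
    -- and (iv) `[U3,U2;U1,U4]` is conjugate to `[U1,U2;U3,U4]⁻¹`
    (∃ hbij : Function.Bijective (crossRatio U1 U2 U3 U4 h12 h34),
      crossRatio U1 U4 U3 U2 h14 h23.symm
        = (LinearEquiv.ofBijective (crossRatio U1 U2 U3 U4 h12 h34) hbij).symm.toLinearMap ∧
      ∃ h : U1 ≃ₗ[ℝ] U3,
        crossRatio U3 U2 U1 U4 h23.symm h14
          = h.toLinearMap ∘ₗ
              (LinearEquiv.ofBijective (crossRatio U1 U2 U3 U4 h12 h34) hbij).symm.toLinearMap ∘ₗ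
                h.symm.toLinearMap) := by

  set A := crossRatio U1 U2 U3 U4 h12 h34 with hA
  set B := crossRatio U1 U4 U3 U2 h14 h23.symm with hB
  have hBA : B ∘ₗ A = LinearMap.id := crossRatio_comp h12 h34 h14 h23.symm
  have hAB : A ∘ₗ B = LinearMap.id := crossRatio_comp h14 h23.symm h12 h34
  have hBA' : ∀ x, B (A x) = x := fun x => by
    simpa using LinearMap.congr_fun hBA x
  have hAB' : ∀ x, A (B x) = x := fun x => by
    simpa using LinearMap.congr_fun hAB x
  have hbij : Function.Bijective A :=
    ⟨Function.LeftInverse.injective hBA', Function.RightInverse.surjective hAB'⟩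
  have hBe : B = (LinearEquiv.ofBijective A hbij).symm.toLinearMap := by
    refine LinearMap.ext fun x => ?_
    apply hbij.injective
    rw [hAB' x]
    have := (LinearEquiv.ofBijective A hbij).apply_symm_apply x
    simpa [LinearEquiv.ofBijective_apply] using this.symm
  refine ⟨?_, ?_, hbij, hBe.symm ▸ rfl, ?_⟩
  · -- (i) equivariance
    intro e h12' h34'
    have key : ∀ x : U1,
        crossRatio (U1.map (e : V →ₗ[ℝ] V)) (U2.map (e : V →ₗ[ℝ] V))
          (U3.map (e : V →ₗ[ℝ] V)) (U4.map (e : V →ₗ[ℝ] V)) h12' h34'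
          ((e.submoduleMap U1) x)
        = (e.submoduleMap U1) (A x) := by
      intro x
      set y : V := ((U3.linearProjOfIsCompl U4 h34 (x : V) : U3) : V) with hy
      have hy3 : y ∈ U3 := Submodule.coe_mem _
      have hy4 : (x : V) - y ∈ U4 := sub_projTo_mem h34 (x : V)
      have hc : y - ((A x : U1) : V) ∈ U2 := sub_projTo_mem h12 y
      refine crossRatio_eq h12' h34' _ _ (e y) (Submodule.mem_map_of_mem hy3) ?_ ?_
      · rw [LinearEquiv.submoduleMap_apply, ← map_sub]
        exact Submodule.mem_map_of_mem hy4
      · rw [LinearEquiv.submoduleMap_apply, ← map_sub]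
        exact Submodule.mem_map_of_mem hc
    refine LinearMap.ext fun z => ?_
    simp only [LinearMap.comp_apply, LinearEquiv.coe_coe]
    have hk := key ((e.submoduleMap U1).symm z)
    rwa [LinearEquiv.apply_symm_apply] at hk
  · -- (ii)
    refine LinearMap.ext fun x => ?_
    simp only [LinearMap.sub_apply, LinearMap.id_apply]
    set y : V := ((U3.linearProjOfIsCompl U4 h34 (x : V) : U3) : V) with hy
    have hy4 : (x : V) - y ∈ U4 := sub_projTo_mem h34 (x : V)
    have h1 : U4.linearProjOfIsCompl U3 h34.symm (x : V) = ⟨(x : V) - y, hy4⟩ :=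
      proj_eq_of h34.symm (by simpa [hy] using Submodule.coe_mem (U3.linearProjOfIsCompl U4 h34 (x : V)))
    show U1.linearProjOfIsCompl U2 h12 ((U4.linearProjOfIsCompl U3 h34.symm (x : V) : U4) : V) = _
    rw [h1]
    have h2 : (U1.linearProjOfIsCompl U2 h12) ((x : V) - y)
        = (U1.linearProjOfIsCompl U2 h12) (x : V) - (U1.linearProjOfIsCompl U2 h12) y :=
      map_sub _ _ _
    rw [h2, (show U1.linearProjOfIsCompl U2 h12 x = x from
      Submodule.projectionOnto_apply_left h12 x)]
    rfl
  · -- (iv)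
    have h32 : IsCompl U3 U2 := h23.symm
    have hfg : ((U3.linearProjOfIsCompl U2 h32) ∘ₗ U1.subtype) ∘ₗ
        ((U1.linearProjOfIsCompl U2 h12) ∘ₗ U3.subtype) = LinearMap.id := by
      refine LinearMap.ext fun z => ?_
      simp only [LinearMap.comp_apply, LinearMap.id_apply, Submodule.subtype_apply]
      exact proj_eq_of h32 (by simpa [neg_sub] using U2.neg_mem (sub_projTo_mem h12 (z : V)))
    have hgf : ((U1.linearProjOfIsCompl U2 h12) ∘ₗ U3.subtype) ∘ₗ
        ((U3.linearProjOfIsCompl U2 h32) ∘ₗ U1.subtype) = LinearMap.id := by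
      refine LinearMap.ext fun z => ?_
      simp only [LinearMap.comp_apply, LinearMap.id_apply, Submodule.subtype_apply]
      exact proj_eq_of h12 (by simpa [neg_sub] using U2.neg_mem (sub_projTo_mem h32 (z : V)))
    set hE : U1 ≃ₗ[ℝ] U3 := LinearEquiv.ofLinear
      ((U3.linearProjOfIsCompl U2 h32) ∘ₗ U1.subtype)
      ((U1.linearProjOfIsCompl U2 h12) ∘ₗ U3.subtype) hfg hgf with hEdef
    refine ⟨hE, ?_⟩
    rw [← hBe]
    clear hBe
    have key : ∀ x : U1, crossRatio U3 U2 U1 U4 h23.symm h14 (hE x) = hE (B x) := by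
      intro x
      rfl
    refine LinearMap.ext fun z => ?_
    simp only [LinearMap.comp_apply, LinearEquiv.coe_coe]
    have hk := key (hE.symm z)
    rwa [LinearEquiv.apply_symm_apply] at hk
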